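/- Let ι be a finite index set with nonempty (not necessarily finite) domains X i, and let F be a decomposable min-sum expression in these variables in which every leaf function is bounded below. Define M(F) ∈ ℝ recursively: M of a leaf (i, φ) is ⨅_{t ∈ X i} φ t; M of a Plus node is the sum of the M-values of its children; M of a Min node is the minimum of the M-values of its children. Then ⨅_{x : ∀ i, X i} eval F x = M(F). -/

import Mathlib

/-- A min-sum expression (MSF): a sum-product expression on the min-sum
semiring `(ℝ ∪ {∞}, min, +, ∞, 0)` in variables indexed by `ι` with domains
`X i`.  A leaf is a pair `(i, φ)` with `φ : X i → ℝ`; internal nodes are Min or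
Plus nodes with a nonempty finite list of children (encoded as a head child
together with the list of remaining children). -/
inductive MSF (ι : Type) (X : ι → Type) where
  | leaf : (i : ι) → (X i → ℝ) → MSF ι X
  | mins : MSF ι X → List (MSF ι X) → MSF ι X
  | plus : MSF ι X → List (MSF ι X) → MSF ι X

namespace MSF

variable {ι : Type} [DecidableEq ι] {X : ι → Type}

/-- Evaluation of an MSF at a full assignment: a leaf `(i, φ)` evaluates to
`φ (x i)`, a Min node to the minimum of its children's values, and a Plus node
to the sum of its children's values. -/
def eval : MSF ι X → ((i : ι) → X i) → ℝ
  | .leaf i φ, x => φ (x i)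
  | .mins h t, x => (t.attach.map fun c => c.1.eval x).foldr min (h.eval x)
  | .plus h t, x => h.eval x + (t.attach.map fun c => c.1.eval x).sum
decreasing_by all_goals first
  | (simp_wf; have := List.sizeOf_lt_of_mem c.2; omega)
  | (simp_wf; omega)

/-- The scope of an MSF: the set of variable indices appearing in its leaves. -/
def scope : MSF ι X → Finset ι
  | .leaf i _ => {i}
  | .mins h t => (t.attach.map fun c => c.1.scope).foldr (· ∪ ·) h.scope
  | .plus h t => (t.attach.map fun c => c.1.scope).foldr (· ∪ ·) h.scope
decreasing_by all_goals first
  | (simp_wf; have := List.sizeOf_lt_of_mem c.2; omega)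
  | (simp_wf; omega)

/-- An MSF is decomposable iff the children of every Plus node have pairwise
disjoint scopes. -/
inductive Decomposable : MSF ι X → Prop
  | leaf (i : ι) (φ : X i → ℝ) : Decomposable (.leaf i φ)
  | mins {h : MSF ι X} {t : List (MSF ι X)} :
      Decomposable h → (∀ G ∈ t, Decomposable G) → Decomposable (.mins h t)
  | plus {h : MSF ι X} {t : List (MSF ι X)} :
      Decomposable h → (∀ G ∈ t, Decomposable G) →
      (h :: t).Pairwise (fun G H => Disjoint G.scope H.scope) →
      Decomposable (.plus h t)

/-- Every leaf function of the MSF is bounded below. -/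
inductive BddLeaves : MSF ι X → Prop
  | leaf (i : ι) (φ : X i → ℝ) : BddBelow (Set.range φ) → BddLeaves (.leaf i φ)
  | mins {h : MSF ι X} {t : List (MSF ι X)} :
      BddLeaves h → (∀ G ∈ t, BddLeaves G) → BddLeaves (.mins h t)
  | plus {h : MSF ι X} {t : List (MSF ι X)} :
      BddLeaves h → (∀ G ∈ t, BddLeaves G) → BddLeaves (.plus h t)

/-- The bottom-up minimization pass `M`: `M` of a leaf `(i, φ)` is
`⨅ t : X i, φ t`, of a Plus node the sum of its children's values, of a Min
node the minimum of its children's values. -/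
noncomputable def M : MSF ι X → ℝ
  | .leaf _ φ => ⨅ t, φ t
  | .mins h t => (t.attach.map fun c => c.1.M).foldr min h.M
  | .plus h t => h.M + (t.attach.map fun c => c.1.M).sum
decreasing_by all_goals first
  | (simp_wf; have := List.sizeOf_lt_of_mem c.2; omega)
  | (simp_wf; omega)

end MSF


namespace MSF

variable {ι : Type} [DecidableEq ι] {X : ι → Type}

set_option linter.unusedSectionVars false
set_option linter.unusedVariables false

theorem rec' {motive : MSF ι X → Prop}
    (leaf : ∀ i φ, motive (.leaf i φ))
    (mins : ∀ h t, motive h → (∀ c ∈ t, motive c) → motive (.mins h t))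
    (plus : ∀ h t, motive h → (∀ c ∈ t, motive c) → motive (.plus h t)) :
    ∀ F, motive F
  | .leaf i φ => leaf i φ
  | .mins h t => mins h t (rec' leaf mins plus h) (fun c hc => rec' leaf mins plus c)
  | .plus h t => plus h t (rec' leaf mins plus h) (fun c hc => rec' leaf mins plus c)
termination_by F => sizeOf F
decreasing_by all_goals first
  | (simp_wf; have := List.sizeOf_lt_of_mem hc; omega)
  | (simp_wf; omega)

theorem eval_leaf (i : ι) (φ : X i → ℝ) (x : (i : ι) → X i) :
    (MSF.leaf i φ).eval x = φ (x i) := by rw [eval]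

theorem eval_mins (h : MSF ι X) (t : List (MSF ι X)) (x : (i : ι) → X i) :
    (MSF.mins h t).eval x = (t.map (fun c => c.eval x)).foldr min (h.eval x) := by
  have e := @List.attach_map_val _ _ t (fun c => c.eval x)
  rw [eval, e]

theorem eval_plus (h : MSF ι X) (t : List (MSF ι X)) (x : (i : ι) → X i) :
    (MSF.plus h t).eval x = h.eval x + (t.map (fun c => c.eval x)).sum := by
  have e := @List.attach_map_val _ _ t (fun c => c.eval x)
  rw [eval, e]

theorem scope_leaf (i : ι) (φ : X i → ℝ) : (MSF.leaf i φ).scope = {i} := by rw [scope]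

theorem scope_mins (h : MSF ι X) (t : List (MSF ι X)) :
    (MSF.mins h t).scope = (t.map (fun c => c.scope)).foldr (· ∪ ·) h.scope := by
  have e := @List.attach_map_val _ _ t (fun c => c.scope)
  rw [scope, e]

theorem scope_plus (h : MSF ι X) (t : List (MSF ι X)) :
    (MSF.plus h t).scope = (t.map (fun c => c.scope)).foldr (· ∪ ·) h.scope := by
  have e := @List.attach_map_val _ _ t (fun c => c.scope)
  rw [scope, e]

theorem M_leaf (i : ι) (φ : X i → ℝ) : (MSF.leaf i φ).M = ⨅ t, φ t := by rw [M]

theorem M_mins (h : MSF ι X) (t : List (MSF ι X)) :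
    (MSF.mins h t).M = (t.map (fun c => c.M)).foldr min h.M := by
  have e := @List.attach_map_val _ _ t (fun c => c.M)
  rw [M, e]

theorem M_plus (h : MSF ι X) (t : List (MSF ι X)) :
    (MSF.plus h t).M = h.M + (t.map (fun c => c.M)).sum := by
  have e := @List.attach_map_val _ _ t (fun c => c.M)
  rw [M, e]

theorem mem_foldr_union {b : Finset ι} {l : List (Finset ι)} {i : ι} :
    i ∈ l.foldr (· ∪ ·) b ↔ i ∈ b ∨ ∃ s ∈ l, i ∈ s := by
  induction l with
  | nil => simp
  | cons c l ih => simp [ih]; tauto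

theorem foldr_min_le_init (l : List ℝ) (b : ℝ) : l.foldr min b ≤ b := by
  induction l with
  | nil => simp
  | cons c l ih => exact le_trans (min_le_right _ _) ih

theorem foldr_min_le_mem {a : ℝ} {l : List ℝ} (ha : a ∈ l) (b : ℝ) :
    l.foldr min b ≤ a := by
  induction l with
  | nil => simp at ha
  | cons c l ih =>
    rcases List.mem_cons.1 ha with rfl | ha
    · exact min_le_left _ _
    · exact le_trans (min_le_right _ _) (ih ha)

theorem foldr_min_eq (l : List ℝ) (b : ℝ) : l.foldr min b = b ∨ l.foldr min b ∈ l := by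
  induction l with
  | nil => simp
  | cons c l ih =>
    simp only [List.foldr_cons]
    rcases le_total c (l.foldr min b) with hc | hc
    · right; simp [min_eq_left hc]
    · rw [min_eq_right hc]
      rcases ih with h | h
      · exact Or.inl h
      · exact Or.inr (List.mem_cons_of_mem _ h)

theorem foldr_min_mono {α : Type*} {l : List α} (f g : α → ℝ) {b b' : ℝ}
    (hb : b ≤ b') (h : ∀ a ∈ l, f a ≤ g a) :
    (l.map f).foldr min b ≤ (l.map g).foldr min b' := by
  induction l with
  | nil => simpa
  | cons c l ih =>
    simp only [List.map_cons, List.foldr_cons]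
    exact min_le_min (h c (by simp)) (ih (fun a ha => h a (List.mem_cons_of_mem _ ha)))

theorem eval_congr : ∀ (F : MSF ι X) (x y : (i : ι) → X i),
    (∀ i ∈ F.scope, x i = y i) → F.eval x = F.eval y := by
  refine rec' ?_ ?_ ?_
  · intro i φ x y hxy
    rw [eval_leaf, eval_leaf, hxy i (by simp [scope_leaf])]
  · intro h t IH IHt x y hxy
    rw [eval_mins, eval_mins]
    have hsub : ∀ i ∈ h.scope, x i = y i := fun i hi =>
      hxy i (by rw [scope_mins]; exact mem_foldr_union.2 (Or.inl hi))
    have hmap : t.map (fun c => c.eval x) = t.map (fun c => c.eval y) := by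
      apply List.map_congr_left
      intro c hc
      refine IHt c hc x y (fun i hi => hxy i ?_)
      rw [scope_mins]
      exact mem_foldr_union.2 (Or.inr ⟨c.scope, List.mem_map_of_mem hc, hi⟩)
    rw [hmap, IH x y hsub]
  · intro h t IH IHt x y hxy
    rw [eval_plus, eval_plus]
    have hsub : ∀ i ∈ h.scope, x i = y i := fun i hi =>
      hxy i (by rw [scope_plus]; exact mem_foldr_union.2 (Or.inl hi))
    have hmap : t.map (fun c => c.eval x) = t.map (fun c => c.eval y) := by
      apply List.map_congr_left
      intro c hc
      refine IHt c hc x y (fun i hi => hxy i ?_)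
      rw [scope_plus]
      exact mem_foldr_union.2 (Or.inr ⟨c.scope, List.mem_map_of_mem hc, hi⟩)
    rw [hmap, IH x y hsub]

theorem M_le_eval : ∀ (F : MSF ι X), F.BddLeaves → ∀ x, F.M ≤ F.eval x := by
  refine rec' ?_ ?_ ?_
  · intro i φ hb x
    cases hb with
    | leaf _ _ hb => rw [M_leaf, eval_leaf]; exact ciInf_le hb (x i)
  · intro h t IH IHt hb x
    cases hb with
    | mins hbh hbt =>
      rw [M_mins, eval_mins]
      exact foldr_min_mono _ _ (IH hbh x) (fun c hc => IHt c hc (hbt c hc) x)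
  · intro h t IH IHt hb x
    cases hb with
    | plus hbh hbt =>
      rw [M_plus, eval_plus]
      refine add_le_add (IH hbh x) ?_
      exact List.sum_le_sum (fun c hc => IHt c hc (hbt c hc) x)

variable [∀ i, Nonempty (X i)]

theorem exists_eval_lt : ∀ (F : MSF ι X), F.Decomposable → F.BddLeaves →
    ∀ ε : ℝ, 0 < ε → ∃ x : (i : ι) → X i, F.eval x < F.M + ε := by
  refine rec' ?_ ?_ ?_
  · -- leaf
    intro i φ hdec hbdd ε hε
    cases hbdd with
    | leaf _ _ hb =>
      have hlt : (⨅ t, φ t) < (⨅ t, φ t) + ε := lt_add_of_pos_right _ hε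
      obtain ⟨t, ht⟩ := exists_lt_of_ciInf_lt hlt
      refine ⟨Function.update (fun j => Classical.arbitrary (X j)) i t, ?_⟩
      rw [eval_leaf, M_leaf, Function.update_self]
      exact ht
  · -- mins
    intro h t IH IHt hdec hbdd ε hε
    cases hdec with
    | mins hdh hdt =>
    cases hbdd with
    | mins hbh hbt =>
      rw [M_mins]
      rcases foldr_min_eq (t.map (fun c => c.M)) h.M with heq | hmem
      · obtain ⟨x, hx⟩ := IH hdh hbh ε hε
        refine ⟨x, ?_⟩
        rw [eval_mins, heq]
        exact lt_of_le_of_lt (foldr_min_le_init _ _) hx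
      · obtain ⟨c, hct, hc⟩ := List.mem_map.1 hmem
        obtain ⟨x, hx⟩ := IHt c hct (hdt c hct) (hbt c hct) ε hε
        refine ⟨x, ?_⟩
        rw [eval_mins, ← hc]
        exact lt_of_le_of_lt
          (foldr_min_le_mem (List.mem_map_of_mem hct) _) hx
  · -- plus
    intro h t IH IHt hdec hbdd ε hε
    cases hdec with
    | plus hdh hdt hpw =>
    cases hbdd with
    | plus hbh hbt =>
      have key : ∀ (u : List (MSF ι X)),
          (∀ c ∈ u, Decomposable c) → (∀ c ∈ u, BddLeaves c) →
          (∀ c ∈ u, Decomposable c → BddLeaves c → ∀ ε : ℝ, 0 < ε →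
            ∃ x, c.eval x < c.M + ε) →
          (h :: u).Pairwise (fun G H => Disjoint G.scope H.scope) →
          ∀ ε : ℝ, 0 < ε →
          ∃ x, h.eval x + (u.map (fun c => c.eval x)).sum
              < h.M + (u.map (fun c => c.M)).sum + ε := by
        intro u
        induction u with
        | nil =>
          intro _ _ _ _ ε hε
          obtain ⟨x, hx⟩ := IH hdh hbh ε hε
          exact ⟨x, by simpa using hx⟩
        | cons c u ihu =>
          intro hdu hbu hmu hpwu ε hε
          have hε2 : (0:ℝ) < ε / 2 := by linarith
          -- pairwise for (h :: u)
          have hsub : (h :: u).Sublist (h :: c :: u) :=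
            ((List.sublist_cons_self c u).cons₂ h)
          have hpw' : (h :: u).Pairwise (fun G H => Disjoint G.scope H.scope) :=
            hpwu.sublist hsub
          obtain ⟨x1, hx1⟩ := ihu (fun d hd => hdu d (List.mem_cons_of_mem _ hd))
            (fun d hd => hbu d (List.mem_cons_of_mem _ hd))
            (fun d hd => hmu d (List.mem_cons_of_mem _ hd)) hpw' (ε / 2) hε2
          obtain ⟨x2, hx2⟩ := hmu c (List.mem_cons_self)
            (hdu c (List.mem_cons_self)) (hbu c (List.mem_cons_self))
            (ε / 2) hε2
          -- disjointness of c's scope from h and members of u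
          rcases List.pairwise_cons.1 hpwu with ⟨hh, hpwcu⟩
          have hdisj_h : Disjoint h.scope c.scope := hh c (List.mem_cons_self)
          rcases List.pairwise_cons.1 hpwcu with ⟨hcu, _⟩
          -- the patched assignment
          set S : Finset ι := h.scope ∪ (u.map (fun d => d.scope)).foldr (· ∪ ·) ∅ with hS
          set x : (i : ι) → X i := fun i => if i ∈ S then x1 i else x2 i with hxdef
          have hxh : h.eval x = h.eval x1 := by
            apply eval_congr
            intro i hi
            simp only [hxdef]
            rw [if_pos (Finset.mem_union_left _ hi)]
          have hxu : ∀ d ∈ u, d.eval x = d.eval x1 := by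
            intro d hd
            apply eval_congr
            intro i hi
            simp only [hxdef]
            rw [if_pos (Finset.mem_union_right _ (mem_foldr_union.2
              (Or.inr ⟨d.scope, List.mem_map_of_mem hd, hi⟩)))]
          have hxc : c.eval x = c.eval x2 := by
            apply eval_congr
            intro i hi
            simp only [hxdef]
            rw [if_neg]
            intro hiS
            rcases Finset.mem_union.1 hiS with hih | hifold
            · exact (Finset.disjoint_left.1 hdisj_h hih) hi
            · rcases mem_foldr_union.1 hifold with h0 | ⟨s, hs, his⟩
              · simp at h0
              · obtain ⟨d, hd, rfl⟩ := List.mem_map.1 hs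
                exact (Finset.disjoint_left.1 (hcu d hd) hi) his
          refine ⟨x, ?_⟩
          simp only [List.map_cons, List.sum_cons]
          have hmapu : u.map (fun d => d.eval x) = u.map (fun d => d.eval x1) :=
            List.map_congr_left hxu
          rw [hxh, hxc, hmapu]
          linarith
      obtain ⟨x, hx⟩ := key t hdt hbt IHt hpw ε hε
      refine ⟨x, ?_⟩
      rw [eval_plus, M_plus]
      linarith

end MSF

/-- Corollary 7 (the global minimum of a decomposable MSF can be found in time
linear in its size): for a decomposable min-sum expression with leaf functions
bounded below, the infimum of its evaluation over all full assignments equals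
the linear-time bottom-up value `M(F)`. -/
theorem global_min_decomposable_msf
    {ι : Type} [Fintype ι] [DecidableEq ι] {X : ι → Type} [∀ i, Nonempty (X i)]
    (F : MSF ι X) (hdec : F.Decomposable) (hbdd : F.BddLeaves) :
    ⨅ x : (i : ι) → X i, F.eval x = F.M := by
  have hM := MSF.M_le_eval F hbdd
  have hbddr : BddBelow (Set.range fun x : (i : ι) → X i => F.eval x) :=
    ⟨F.M, by rintro _ ⟨x, rfl⟩; exact hM x⟩
  apply le_antisymm
  · apply le_of_forall_pos_le_add
    intro ε hε
    obtain ⟨x, hx⟩ := MSF.exists_eval_lt F hdec hbdd ε hε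
    exact le_trans (ciInf_le hbddr x) hx.le
  · exact le_ciInf hM
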